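/- In Cl_5, for all real numbers μ₁₂, λ₁₂₄, μ₁₃, λ₁₂₅, λ₁₃, μ₁₄, μ₂₃, set x = μ₁₂ • (e₃*e₁*e₂) + λ₁₂₄ • (e₄*e₁*e₂) + μ₁₃ • (e₄*e₁*e₃) + λ₁₂₅ • (e₅*e₁*e₂) + λ₁₃ • (e₅*e₁*e₃) + μ₁₄ • (e₅*e₁*e₄) + μ₂₃ • (e₅*e₂*e₃). Then x is NOT a unit of Cl_5 if and only if (μ₁₂² + λ₁₂₄² + μ₁₃² + λ₁₂₅² + λ₁₃² + μ₁₄² + μ₂₃²)² = 4·(μ₁₄²·μ₂₃² + (-μ₁₃·λ₁₂₅ + λ₁₃·λ₁₂₄ - μ₁₂·μ₁₄)² + λ₁₂₄²·μ₂₃² + μ₁₃²·μ₂₃²). (x is 4× the invariant Dirac operator of a metric on the nilpotent Lie algebra 𝒩₅,₁ = (0,0,12,13,14+23); this is the 𝒩₅,₁ case of the paper's Theorem on left-invariant harmonic spinors on 5-dimensional nilmanifolds.) -/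

import Mathlib

open scoped BigOperators

/-- The negative-definite quadratic form `Q v = -∑ i, (v i)^2` on `EuclideanSpace ℝ (Fin n)`. -/
noncomputable def Q (n : ℕ) : QuadraticForm ℝ (EuclideanSpace ℝ (Fin n)) :=
  QuadraticMap.ofPolar (fun v => -∑ i, v i ^ 2)
    (fun a v => by
      simp only [PiLp.smul_apply, smul_eq_mul, mul_pow]
      rw [← Finset.mul_sum]
      ring)
    (fun x x' y => by
      have h : ∀ (u w : EuclideanSpace ℝ (Fin n)),
          QuadraticMap.polar (fun v : EuclideanSpace ℝ (Fin n) => -∑ i, v i ^ 2) u w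
            = -(2 * ∑ i, u i * w i) := by
        intro u w
        have hsq : ∀ i, (u i + w i) ^ 2 = u i ^ 2 + w i ^ 2 + 2 * (u i * w i) := fun i => by ring
        simp_rw [QuadraticMap.polar, PiLp.add_apply, hsq, Finset.sum_add_distrib,
          ← Finset.mul_sum]
        ring
      simp_rw [h, PiLp.add_apply, add_mul, Finset.sum_add_distrib]
      ring)
    (fun a x y => by
      have h : ∀ (u w : EuclideanSpace ℝ (Fin n)),
          QuadraticMap.polar (fun v : EuclideanSpace ℝ (Fin n) => -∑ i, v i ^ 2) u w
            = -(2 * ∑ i, u i * w i) := by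
        intro u w
        have hsq : ∀ i, (u i + w i) ^ 2 = u i ^ 2 + w i ^ 2 + 2 * (u i * w i) := fun i => by ring
        simp_rw [QuadraticMap.polar, PiLp.add_apply, hsq, Finset.sum_add_distrib,
          ← Finset.mul_sum]
        ring
      simp_rw [h, PiLp.smul_apply, smul_eq_mul, mul_assoc, ← Finset.mul_sum]
      ring)

/-- The image in the Clifford algebra `Cl_n` of the `i`-th standard basis vector. -/
noncomputable def e {n : ℕ} (i : Fin n) : CliffordAlgebra (Q n) :=
  CliffordAlgebra.ι (Q n) (EuclideanSpace.single i 1)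



set_option linter.unreachableTactic false
set_option linter.unusedTactic false
set_option maxHeartbeats 2000000

lemma Qapply (n : ℕ) (v : EuclideanSpace ℝ (Fin n)) : Q n v = -∑ i, v i ^ 2 := rfl

lemma hQone (i : Fin 5) : Q 5 (EuclideanSpace.single i 1) = -1 := by
  rw [Qapply]
  simp [EuclideanSpace.single_apply, apply_ite (· ^ (2:ℕ))]

lemma e_sq (i : Fin 5) : e i * e i = -1 := by
  rw [e, CliffordAlgebra.ι_sq_scalar, hQone]
  simp

lemma polar_single (i j : Fin 5) (h : i ≠ j) :
    QuadraticMap.polar (Q 5) (EuclideanSpace.single i 1) (EuclideanSpace.single j 1) = 0 := by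
  rw [QuadraticMap.polar, Qapply, Qapply, Qapply]
  have hk : ∀ k : Fin 5, ((EuclideanSpace.single i 1 + EuclideanSpace.single j 1 : EuclideanSpace ℝ (Fin 5)) k) ^ 2
      = ((EuclideanSpace.single i 1 : EuclideanSpace ℝ (Fin 5)) k)^2 + ((EuclideanSpace.single j 1 : EuclideanSpace ℝ (Fin 5)) k)^2 := by
    intro k
    by_cases h1 : k = i <;> by_cases h2 : k = j
    · exact absurd (h1 ▸ h2) (h1 ▸ h)
    all_goals simp [PiLp.add_apply, EuclideanSpace.single_apply, h1, h2, h, Ne.symm h]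
  simp_rw [hk, Finset.sum_add_distrib]
  ring

lemma e_swap (i j : Fin 5) (h : i ≠ j) : e i * e j = -(e j * e i) := by
  have := CliffordAlgebra.ι_mul_ι_add_swap (EuclideanSpace.single i 1) (EuclideanSpace.single j 1) (Q := Q 5)
  rw [polar_single i j h] at this
  simp only [map_zero] at this
  rw [e, e]
  linear_combination (norm := noncomm_ring) this

lemma e_swap_lt (i j : Fin 5) (h : j < i) : e i * e j = -(e j * e i) := e_swap i j (ne_of_gt h)

lemma e_swap' (i j : Fin 5) (h : j < i) (z : CliffordAlgebra (Q 5)) :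
    e i * (e j * z) = -(e j * (e i * z)) := by
  rw [← mul_assoc, e_swap i j (ne_of_gt h), neg_mul, mul_assoc]

lemma e_sq' (i : Fin 5) (z : CliffordAlgebra (Q 5)) : e i * (e i * z) = -z := by
  rw [← mul_assoc, e_sq]; simp

noncomputable def Gm : Fin 5 → Matrix (Fin 4) (Fin 4) ℂ :=
  ![!![0, 0, 0, Complex.I; 0, 0, Complex.I, 0; 0, Complex.I, 0, 0; Complex.I, 0, 0, 0],
    !![0, 0, 0, 1; 0, 0, 1, 0; 0, -1, 0, 0; -1, 0, 0, 0],
    !![0, Complex.I, 0, 0; Complex.I, 0, 0, 0; 0, 0, 0, -Complex.I; 0, 0, -Complex.I, 0],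
    !![0, 1, 0, 0; -1, 0, 0, 0; 0, 0, 0, 1; 0, 0, -1, 0],
    !![Complex.I, 0, 0, 0; 0, -Complex.I, 0, 0; 0, 0, Complex.I, 0; 0, 0, 0, -Complex.I]]

lemma Gsq0 : Gm 0 * Gm 0 = -1 := by
  ext a b
  fin_cases a <;> fin_cases b <;>
    norm_num [Gm, Matrix.mul_apply, Fin.sum_univ_four, Matrix.vecTail, Matrix.vecHead,
      Matrix.one_apply, Matrix.neg_apply, Complex.I_mul_I, Function.comp, Matrix.cons_val_two, Matrix.cons_val_three, Matrix.cons_val_four] <;> decide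

lemma Gsq1 : Gm 1 * Gm 1 = -1 := by
  ext a b
  fin_cases a <;> fin_cases b <;>
    norm_num [Gm, Matrix.mul_apply, Fin.sum_univ_four, Matrix.vecTail, Matrix.vecHead,
      Matrix.one_apply, Matrix.neg_apply, Complex.I_mul_I, Function.comp, Matrix.cons_val_two, Matrix.cons_val_three, Matrix.cons_val_four] <;> decide

lemma Gsq2 : Gm 2 * Gm 2 = -1 := by
  ext a b
  fin_cases a <;> fin_cases b <;>
    norm_num [Gm, Matrix.mul_apply, Fin.sum_univ_four, Matrix.vecTail, Matrix.vecHead,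
      Matrix.one_apply, Matrix.neg_apply, Complex.I_mul_I, Function.comp, Matrix.cons_val_two, Matrix.cons_val_three, Matrix.cons_val_four] <;> decide

lemma Gsq3 : Gm 3 * Gm 3 = -1 := by
  ext a b
  fin_cases a <;> fin_cases b <;>
    norm_num [Gm, Matrix.mul_apply, Fin.sum_univ_four, Matrix.vecTail, Matrix.vecHead,
      Matrix.one_apply, Matrix.neg_apply, Complex.I_mul_I, Function.comp, Matrix.cons_val_two, Matrix.cons_val_three, Matrix.cons_val_four] <;> decide

lemma Gsq4 : Gm 4 * Gm 4 = -1 := by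
  ext a b
  fin_cases a <;> fin_cases b <;>
    norm_num [Gm, Matrix.mul_apply, Fin.sum_univ_four, Matrix.vecTail, Matrix.vecHead,
      Matrix.one_apply, Matrix.neg_apply, Complex.I_mul_I, Function.comp, Matrix.cons_val_two, Matrix.cons_val_three, Matrix.cons_val_four] <;> decide

lemma Gsw10 : Gm 1 * Gm 0 = -(Gm 0 * Gm 1) := by
  ext a b
  fin_cases a <;> fin_cases b <;>
    norm_num [Gm, Matrix.mul_apply, Fin.sum_univ_four, Matrix.vecTail, Matrix.vecHead,
      Matrix.one_apply, Matrix.neg_apply, Complex.I_mul_I, Function.comp, Matrix.cons_val_two, Matrix.cons_val_three, Matrix.cons_val_four] <;> decide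

lemma Gsw20 : Gm 2 * Gm 0 = -(Gm 0 * Gm 2) := by
  ext a b
  fin_cases a <;> fin_cases b <;>
    norm_num [Gm, Matrix.mul_apply, Fin.sum_univ_four, Matrix.vecTail, Matrix.vecHead,
      Matrix.one_apply, Matrix.neg_apply, Complex.I_mul_I, Function.comp, Matrix.cons_val_two, Matrix.cons_val_three, Matrix.cons_val_four] <;> decide

lemma Gsw21 : Gm 2 * Gm 1 = -(Gm 1 * Gm 2) := by
  ext a b
  fin_cases a <;> fin_cases b <;>
    norm_num [Gm, Matrix.mul_apply, Fin.sum_univ_four, Matrix.vecTail, Matrix.vecHead,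
      Matrix.one_apply, Matrix.neg_apply, Complex.I_mul_I, Function.comp, Matrix.cons_val_two, Matrix.cons_val_three, Matrix.cons_val_four] <;> decide

lemma Gsw30 : Gm 3 * Gm 0 = -(Gm 0 * Gm 3) := by
  ext a b
  fin_cases a <;> fin_cases b <;>
    norm_num [Gm, Matrix.mul_apply, Fin.sum_univ_four, Matrix.vecTail, Matrix.vecHead,
      Matrix.one_apply, Matrix.neg_apply, Complex.I_mul_I, Function.comp, Matrix.cons_val_two, Matrix.cons_val_three, Matrix.cons_val_four] <;> decide

lemma Gsw31 : Gm 3 * Gm 1 = -(Gm 1 * Gm 3) := by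
  ext a b
  fin_cases a <;> fin_cases b <;>
    norm_num [Gm, Matrix.mul_apply, Fin.sum_univ_four, Matrix.vecTail, Matrix.vecHead,
      Matrix.one_apply, Matrix.neg_apply, Complex.I_mul_I, Function.comp, Matrix.cons_val_two, Matrix.cons_val_three, Matrix.cons_val_four] <;> decide

lemma Gsw32 : Gm 3 * Gm 2 = -(Gm 2 * Gm 3) := by
  ext a b
  fin_cases a <;> fin_cases b <;>
    norm_num [Gm, Matrix.mul_apply, Fin.sum_univ_four, Matrix.vecTail, Matrix.vecHead,
      Matrix.one_apply, Matrix.neg_apply, Complex.I_mul_I, Function.comp, Matrix.cons_val_two, Matrix.cons_val_three, Matrix.cons_val_four] <;> decide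

lemma Gsw40 : Gm 4 * Gm 0 = -(Gm 0 * Gm 4) := by
  ext a b
  fin_cases a <;> fin_cases b <;>
    norm_num [Gm, Matrix.mul_apply, Fin.sum_univ_four, Matrix.vecTail, Matrix.vecHead,
      Matrix.one_apply, Matrix.neg_apply, Complex.I_mul_I, Function.comp, Matrix.cons_val_two, Matrix.cons_val_three, Matrix.cons_val_four] <;> decide

lemma Gsw41 : Gm 4 * Gm 1 = -(Gm 1 * Gm 4) := by
  ext a b
  fin_cases a <;> fin_cases b <;>
    norm_num [Gm, Matrix.mul_apply, Fin.sum_univ_four, Matrix.vecTail, Matrix.vecHead,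
      Matrix.one_apply, Matrix.neg_apply, Complex.I_mul_I, Function.comp, Matrix.cons_val_two, Matrix.cons_val_three, Matrix.cons_val_four] <;> decide

lemma Gsw42 : Gm 4 * Gm 2 = -(Gm 2 * Gm 4) := by
  ext a b
  fin_cases a <;> fin_cases b <;>
    norm_num [Gm, Matrix.mul_apply, Fin.sum_univ_four, Matrix.vecTail, Matrix.vecHead,
      Matrix.one_apply, Matrix.neg_apply, Complex.I_mul_I, Function.comp, Matrix.cons_val_two, Matrix.cons_val_three, Matrix.cons_val_four] <;> decide

lemma Gsw43 : Gm 4 * Gm 3 = -(Gm 3 * Gm 4) := by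
  ext a b
  fin_cases a <;> fin_cases b <;>
    norm_num [Gm, Matrix.mul_apply, Fin.sum_univ_four, Matrix.vecTail, Matrix.vecHead,
      Matrix.one_apply, Matrix.neg_apply, Complex.I_mul_I, Function.comp, Matrix.cons_val_two, Matrix.cons_val_three, Matrix.cons_val_four] <;> decide


lemma tr0123 : Matrix.trace (Gm 0 * (Gm 1 * (Gm 2 * Gm 3))) = 0 := by
  norm_num [Gm, Matrix.trace, Matrix.diag, Matrix.mul_apply, Fin.sum_univ_four,
    Matrix.vecTail, Matrix.vecHead, Complex.I_mul_I, Function.comp, Matrix.cons_val_two, Matrix.cons_val_three, Matrix.cons_val_four]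

lemma tr0134 : Matrix.trace (Gm 0 * (Gm 1 * (Gm 3 * Gm 4))) = 0 := by
  norm_num [Gm, Matrix.trace, Matrix.diag, Matrix.mul_apply, Fin.sum_univ_four,
    Matrix.vecTail, Matrix.vecHead, Complex.I_mul_I, Function.comp, Matrix.cons_val_two, Matrix.cons_val_three, Matrix.cons_val_four]

lemma tr0234 : Matrix.trace (Gm 0 * (Gm 2 * (Gm 3 * Gm 4))) = 0 := by
  norm_num [Gm, Matrix.trace, Matrix.diag, Matrix.mul_apply, Fin.sum_univ_four,
    Matrix.vecTail, Matrix.vecHead, Complex.I_mul_I, Function.comp, Matrix.cons_val_two, Matrix.cons_val_three, Matrix.cons_val_four]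

lemma tr1234 : Matrix.trace (Gm 1 * (Gm 2 * (Gm 3 * Gm 4))) = 0 := by
  norm_num [Gm, Matrix.trace, Matrix.diag, Matrix.mul_apply, Fin.sum_univ_four,
    Matrix.vecTail, Matrix.vecHead, Complex.I_mul_I, Function.comp, Matrix.cons_val_two, Matrix.cons_val_three, Matrix.cons_val_four]

noncomputable def flin : EuclideanSpace ℝ (Fin 5) →ₗ[ℝ] Matrix (Fin 4) (Fin 4) ℂ where
  toFun v := ∑ i, v i • Gm i
  map_add' u v := by
    simp only [PiLp.add_apply, add_smul, Finset.sum_add_distrib]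
  map_smul' c v := by
    simp only [PiLp.smul_apply, smul_eq_mul, RingHom.id_apply, Finset.smul_sum, mul_smul]

lemma hflin (v : EuclideanSpace ℝ (Fin 5)) :
    flin v * flin v = algebraMap ℝ (Matrix (Fin 4) (Fin 4) ℂ) (Q 5 v) := by
  show (∑ i, v i • Gm i) * (∑ i, v i • Gm i) = _
  rw [Qapply, Algebra.algebraMap_eq_smul_one]
  simp only [Fin.sum_univ_five]
  simp only [add_mul, mul_add, smul_mul_assoc, mul_smul_comm, smul_smul,
    Gsq0, Gsq1, Gsq2, Gsq3, Gsq4, Gsw10, Gsw20, Gsw21, Gsw30, Gsw31, Gsw32, Gsw40, Gsw41, Gsw42, Gsw43, smul_neg]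
  module

noncomputable def φrep : CliffordAlgebra (Q 5) →ₐ[ℝ] Matrix (Fin 4) (Fin 4) ℂ :=
  CliffordAlgebra.lift (Q 5) ⟨flin, hflin⟩

lemma phie (i : Fin 5) : φrep (e i) = Gm i := by
  have h : φrep (e i) = flin (EuclideanSpace.single i 1) := by
    rw [e, φrep, CliffordAlgebra.lift_ι_apply]
  rw [h]
  show (∑ j, (EuclideanSpace.single i 1 : EuclideanSpace ℝ (Fin 5)) j • Gm j) = Gm i
  fin_cases i <;>
    norm_num [EuclideanSpace.single_apply, Fin.sum_univ_five]

/-- **The `𝒩₅,₁` case.** In `Cl₅`, the element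
`x = μ₁₂ • (e₃e₁e₂) + λ₁₂₄ • (e₄e₁e₂) + μ₁₃ • (e₄e₁e₃) + λ₁₂₅ • (e₅e₁e₂)
   + λ₁₃ • (e₅e₁e₃) + μ₁₄ • (e₅e₁e₄) + μ₂₃ • (e₅e₂e₃)`
fails to be a unit iff
`(μ₁₂² + λ₁₂₄² + μ₁₃² + λ₁₂₅² + λ₁₃² + μ₁₄² + μ₂₃²)²
  = 4 (μ₁₄²μ₂₃² + (-μ₁₃λ₁₂₅ + λ₁₃λ₁₂₄ - μ₁₂μ₁₄)² + λ₁₂₄²μ₂₃² + μ₁₃²μ₂₃²)`. -/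
theorem clifford_N51_dirac (μ₁₂ lam₁₂₄ μ₁₃ lam₁₂₅ lam₁₃ μ₁₄ μ₂₃ : ℝ)
    (x : CliffordAlgebra (Q 5))
    (hx : x = μ₁₂ • (e (2 : Fin 5) * e 0 * e 1) + lam₁₂₄ • (e (3 : Fin 5) * e 0 * e 1)
        + μ₁₃ • (e (3 : Fin 5) * e 0 * e 2) + lam₁₂₅ • (e (4 : Fin 5) * e 0 * e 1)
        + lam₁₃ • (e (4 : Fin 5) * e 0 * e 2) + μ₁₄ • (e (4 : Fin 5) * e 0 * e 3)
        + μ₂₃ • (e (4 : Fin 5) * e 1 * e 2)) :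
    ¬ IsUnit x ↔
      (μ₁₂ ^ 2 + lam₁₂₄ ^ 2 + μ₁₃ ^ 2 + lam₁₂₅ ^ 2 + lam₁₃ ^ 2 + μ₁₄ ^ 2 + μ₂₃ ^ 2) ^ 2
        = 4 * (μ₁₄ ^ 2 * μ₂₃ ^ 2 + (-(μ₁₃ * lam₁₂₅) + lam₁₃ * lam₁₂₄ - μ₁₂ * μ₁₄) ^ 2
            + lam₁₂₄ ^ 2 * μ₂₃ ^ 2 + μ₁₃ ^ 2 * μ₂₃ ^ 2) := by
  classical
  obtain ⟨Nr, hNr⟩ : ∃ t : ℝ, t = μ₁₂ ^ 2 + lam₁₂₄ ^ 2 + μ₁₃ ^ 2 + lam₁₂₅ ^ 2 + lam₁₃ ^ 2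
      + μ₁₄ ^ 2 + μ₂₃ ^ 2 := ⟨_, rfl⟩
  obtain ⟨cr, hcr⟩ : ∃ t : ℝ, t = 4 * (μ₁₄ ^ 2 * μ₂₃ ^ 2
      + (-(μ₁₃ * lam₁₂₅) + lam₁₃ * lam₁₂₄ - μ₁₂ * μ₁₄) ^ 2
      + lam₁₂₄ ^ 2 * μ₂₃ ^ 2 + μ₁₃ ^ 2 * μ₂₃ ^ 2) := ⟨_, rfl⟩
  obtain ⟨b, hbdef⟩ : ∃ t : CliffordAlgebra (Q 5),
      t = (-(2*μ₁₄*μ₂₃)) • (e (0:Fin 5) * (e 1 * (e 2 * e 3)))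
      + (2*μ₁₃*μ₂₃) • (e (0:Fin 5) * (e 1 * (e 3 * e 4)))
      + (-(2*lam₁₂₄*μ₂₃)) • (e (0:Fin 5) * (e 2 * (e 3 * e 4)))
      + (2*(-(μ₁₃*lam₁₂₅) + lam₁₃*lam₁₂₄ - μ₁₂*μ₁₄)) • (e (1:Fin 5) * (e 2 * (e 3 * e 4)))
      := ⟨_, rfl⟩
  rw [show (μ₁₂ ^ 2 + lam₁₂₄ ^ 2 + μ₁₃ ^ 2 + lam₁₂₅ ^ 2 + lam₁₃ ^ 2 + μ₁₄ ^ 2 + μ₂₃ ^ 2) ^ 2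
        = Nr ^ 2 by rw [hNr],
      show 4 * (μ₁₄ ^ 2 * μ₂₃ ^ 2 + (-(μ₁₃ * lam₁₂₅) + lam₁₃ * lam₁₂₄ - μ₁₂ * μ₁₄) ^ 2
        + lam₁₂₄ ^ 2 * μ₂₃ ^ 2 + μ₁₃ ^ 2 * μ₂₃ ^ 2) = cr by rw [hcr]]
  have hsq : x * x = Nr • 1 + b := by
    rw [hx, hbdef, hNr]
    simp only [mul_add, add_mul, smul_mul_assoc, mul_smul_comm, smul_smul, mul_assoc]
    simp (disch := decide) only [e_swap_lt, e_swap', e_sq, e_sq', neg_mul, mul_neg, neg_neg,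
      mul_one, one_mul, smul_neg]
    module
  have hb2 : b * b = cr • 1 := by
    rw [hbdef, hcr]
    simp only [mul_add, add_mul, smul_mul_assoc, mul_smul_comm, smul_smul, mul_assoc]
    simp (disch := decide) only [e_swap_lt, e_swap', e_sq, e_sq', neg_mul, mul_neg, neg_neg,
      mul_one, one_mul, smul_neg]
    module
  have h4 : x * (x * (x * x)) = (Nr^2 + cr) • (1 : CliffordAlgebra (Q 5)) + (2*Nr) • b := by
    rw [← mul_assoc, hsq, add_mul, mul_add, mul_add, hb2]
    simp only [smul_mul_assoc, mul_smul_comm, one_mul, mul_one, smul_smul]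
    module
  constructor
  · intro hnu
    by_contra hne
    apply hnu
    have hne0 : cr - Nr^2 ≠ 0 := fun h => hne (by linarith [sub_eq_zero.mp h])
    refine isUnit_iff_exists.mpr ⟨(cr - Nr^2)⁻¹ • (x*(x*x) - (2*Nr) • x), ?_, ?_⟩
    · have hxy : x * (x*(x*x) - (2*Nr)•x) = (cr - Nr^2) • (1 : CliffordAlgebra (Q 5)) := by
        rw [mul_sub, mul_smul_comm, h4, hsq]
        module
      rw [mul_smul_comm, hxy, smul_smul, inv_mul_cancel₀ hne0, one_smul]
    · have hyx : (x*(x*x) - (2*Nr)•x) * x = (cr - Nr^2) • (1 : CliffordAlgebra (Q 5)) := by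
        have h5 : x * (x * x) * x = x * (x * (x * x)) := by rw [mul_assoc, mul_assoc]
        rw [sub_mul, smul_mul_assoc, h5, h4, hsq]
        module
      rw [smul_mul_assoc, hyx, smul_smul, inv_mul_cancel₀ hne0, one_smul]
  · intro heq hu
    have hu2 : IsUnit (x * x) := hu.mul hu
    have h0 : (b - Nr • 1) * (x * x) = (0 : CliffordAlgebra (Q 5)) * (x * x) := by
      rw [hsq, sub_mul, mul_add, mul_add, hb2, ← heq, zero_mul]
      simp only [smul_mul_assoc, mul_smul_comm, one_mul, mul_one, smul_smul]
      module
    have hb0 : b = Nr • 1 := by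
      have := hu2.mul_right_cancel h0
      rwa [sub_eq_zero] at this
    have htr := congrArg Matrix.trace (congrArg φrep hb0)
    rw [hbdef] at htr
    simp only [map_add, map_smul, map_mul, map_one, phie] at htr
    simp only [Matrix.trace_add, Matrix.trace_smul, tr0123, tr0134, tr0234, tr1234,
      Matrix.trace_one, smul_zero, add_zero, zero_add, Fintype.card_fin] at htr
    have hN0 : Nr = 0 := by
      have h4c : (Nr : ℂ) * 4 = 0 := by
        rw [← Complex.real_smul]
        simpa using htr.symm
      rcases mul_eq_zero.mp h4c with h | h
      · exact_mod_cast h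
      · norm_num at h
    rw [hNr] at hN0
    have h1 : μ₁₂ = 0 := by nlinarith [sq_nonneg μ₁₂, sq_nonneg lam₁₂₄, sq_nonneg μ₁₃, sq_nonneg lam₁₂₅, sq_nonneg lam₁₃, sq_nonneg μ₁₄, sq_nonneg μ₂₃]
    have h2 : lam₁₂₄ = 0 := by nlinarith [sq_nonneg μ₁₂, sq_nonneg lam₁₂₄, sq_nonneg μ₁₃, sq_nonneg lam₁₂₅, sq_nonneg lam₁₃, sq_nonneg μ₁₄, sq_nonneg μ₂₃]
    have h3 : μ₁₃ = 0 := by nlinarith [sq_nonneg μ₁₂, sq_nonneg lam₁₂₄, sq_nonneg μ₁₃, sq_nonneg lam₁₂₅, sq_nonneg lam₁₃, sq_nonneg μ₁₄, sq_nonneg μ₂₃]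
    have h4' : lam₁₂₅ = 0 := by nlinarith [sq_nonneg μ₁₂, sq_nonneg lam₁₂₄, sq_nonneg μ₁₃, sq_nonneg lam₁₂₅, sq_nonneg lam₁₃, sq_nonneg μ₁₄, sq_nonneg μ₂₃]
    have h5 : lam₁₃ = 0 := by nlinarith [sq_nonneg μ₁₂, sq_nonneg lam₁₂₄, sq_nonneg μ₁₃, sq_nonneg lam₁₂₅, sq_nonneg lam₁₃, sq_nonneg μ₁₄, sq_nonneg μ₂₃]
    have h6 : μ₁₄ = 0 := by nlinarith [sq_nonneg μ₁₂, sq_nonneg lam₁₂₄, sq_nonneg μ₁₃, sq_nonneg lam₁₂₅, sq_nonneg lam₁₃, sq_nonneg μ₁₄, sq_nonneg μ₂₃]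
    have h7 : μ₂₃ = 0 := by nlinarith [sq_nonneg μ₁₂, sq_nonneg lam₁₂₄, sq_nonneg μ₁₃, sq_nonneg lam₁₂₅, sq_nonneg lam₁₃, sq_nonneg μ₁₄, sq_nonneg μ₂₃]
    have hx0 : x = 0 := by
      rw [hx, h1, h2, h3, h4', h5, h6, h7]
      simp
    rw [hx0] at hu
    have hz := hu.map φrep
    rw [map_zero] at hz
    exact not_isUnit_zero hz
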